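/- Let G1 and G2 be finite digraphs without loops on disjoint nonempty vertex sets and let G = G1 × G2 be their join. For u ∈ V(G1) and v ∈ V(G2), the pair {u,v} is NOT an edge of the strong resolving graph G_SR of G (equivalently, {u,v} is an edge of the complement of G_SR) if and only if at least one of the following holds: u is a solitary vertex of G1; or v is a solitary vertex of G2; or u is an in-out-vertex of G1; or v is an in-out-vertex of G2; or u is an in-vertex of G1 and v is an in-vertex of G2; or u is an out-vertex of G1 and v is an out-vertex of G2. -/

import Mathlib

/-- There is a directed walk of length `n` from `u` to `v` in the digraph with
edge relation `E`. -/
def DWalk {V : Type*} (E : V → V → Prop) (u v : V) (n : ℕ) : Prop :=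
  ∃ f : Fin (n + 1) → V, f 0 = u ∧ f (Fin.last n) = v ∧
    ∀ i : Fin n, E (f i.castSucc) (f i.succ)

/-- The length of a shortest directed path from `u` to `v`. -/
noncomputable def ddist {V : Type*} (E : V → V → Prop) (u v : V) : ℕ :=
  sInf {n | DWalk E u v n}

/-- The digraph with edge relation `E` is strongly connected. -/
def StronglyConnected {V : Type*} (E : V → V → Prop) : Prop :=
  ∀ u v : V, ∃ n : ℕ, DWalk E u v n

/-- `u` is maximally distant to `v` (u MDT v): no in-neighbour of `u` is
farther from `v` than `u` is. -/
def MDT {V : Type*} (E : V → V → Prop) (u v : V) : Prop :=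
  ∀ u', E u' u → ddist E u' v ≤ ddist E u v

/-- `v` is maximally distant from `u` (v MDF u): no out-neighbour of `v` is
farther from `u` than `v` is. -/
def MDF {V : Type*} (E : V → V → Prop) (v u : V) : Prop :=
  ∀ v', E v v' → ddist E u v' ≤ ddist E u v

/-- `u` is mutually maximally distant to `v` (u MMDT v). -/
def MMDT {V : Type*} (E : V → V → Prop) (u v : V) : Prop :=
  MDT E u v ∧ MDF E v u

/-- The strong resolving graph of the digraph with edge relation `E`: an
undirected graph with an edge `{u,v}` iff `u ≠ v` and `u MMDT v` or `v MMDT u`. -/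
def dsrGraph {V : Type*} (E : V → V → Prop) : SimpleGraph V where
  Adj u v := u ≠ v ∧ (MMDT E u v ∨ MMDT E v u)
  symm := by
    constructor
    rintro u v ⟨h1, h2⟩
    exact ⟨h1.symm, h2.symm⟩
  loopless := by
    constructor
    rintro u ⟨h, -⟩
    exact h rfl

/-- `w` strongly resolves `u` to `v`: there is a shortest directed path from
`w` to `v` containing `u` or a shortest directed path from `u` to `w`
containing `v`. -/
def DStronglyResolves {V : Type*} (E : V → V → Prop) (w u v : V) : Prop :=
  ddist E w v = ddist E w u + ddist E u v ∨
  ddist E u w = ddist E u v + ddist E v w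

/-- `R` is a strong resolving set for the digraph with edge relation `E`. -/
def IsDStrongResolvingSet {V : Type*} (E : V → V → Prop) (R : Set V) : Prop :=
  ∀ u v : V, u ≠ v → ∃ w ∈ R, DStronglyResolves E w u v

/-- The strong metric dimension of the digraph with edge relation `E`. -/
noncomputable def dsmd {V : Type*} [Fintype V] (E : V → V → Prop) : ℕ :=
  sInf {n | ∃ R : Finset V, IsDStrongResolvingSet E ↑R ∧ R.card = n}

/-- `C` is a vertex cover of `H`. -/
def IsVertexCover {V : Type*} (H : SimpleGraph V) (C : Set V) : Prop :=
  ∀ a b : V, H.Adj a b → a ∈ C ∨ b ∈ C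

/-- The minimum size of a vertex cover of `H`. -/
noncomputable def tau {V : Type*} [Fintype V] (H : SimpleGraph V) : ℕ :=
  sInf {n | ∃ C : Finset V, IsVertexCover H ↑C ∧ C.card = n}

/-- The join of two digraphs on disjoint vertex sets: keep all edges and add
all edges in both directions between the two graphs. -/
def joinE {V1 V2 : Type*} (E1 : V1 → V1 → Prop) (E2 : V2 → V2 → Prop) :
    V1 ⊕ V2 → V1 ⊕ V2 → Prop
  | Sum.inl a, Sum.inl b => E1 a b
  | Sum.inr a, Sum.inr b => E2 a b
  | Sum.inl _, Sum.inr _ => True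
  | Sum.inr _, Sum.inl _ => True

/-- A solitary vertex: some other vertex with no edge to or from it. -/
def SolitaryVertex {V : Type*} (E : V → V → Prop) (u : V) : Prop :=
  ∃ v : V, v ≠ u ∧ ¬ E u v ∧ ¬ E v u

/-- An in-vertex: some vertex with an edge to `u` but no edge back. -/
def InVertex {V : Type*} (E : V → V → Prop) (u : V) : Prop :=
  ∃ v : V, E v u ∧ ¬ E u v

/-- An out-vertex: some vertex with an edge from `u` but no edge back. -/
def OutVertex {V : Type*} (E : V → V → Prop) (u : V) : Prop :=
  ∃ v : V, E u v ∧ ¬ E v u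

/-- An in-out-vertex: both an in-vertex and an out-vertex. -/
def InOutVertex {V : Type*} (E : V → V → Prop) (u : V) : Prop :=
  InVertex E u ∧ OutVertex E u

open Sum

set_option linter.unusedSectionVars false
lemma dwalk_zero' {V : Type*} (E : V → V → Prop) (u : V) : DWalk E u u 0 :=
  ⟨fun _ => u, rfl, rfl, fun i => i.elim0⟩

lemma dwalk_one' {V : Type*} {E : V → V → Prop} {u v : V} (h : E u v) :
    DWalk E u v 1 := by
  refine ⟨![u, v], rfl, rfl, fun i => ?_⟩
  fin_cases i
  simpa using h

lemma dwalk_two' {V : Type*} {E : V → V → Prop} {u w v : V}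
    (h1 : E u w) (h2 : E w v) : DWalk E u v 2 := by
  refine ⟨![u, w, v], rfl, rfl, fun i => ?_⟩
  fin_cases i <;> simp [h1, h2]

lemma eq_of_dwalk_zero' {V : Type*} {E : V → V → Prop} {u v : V}
    (h : DWalk E u v 0) : u = v := by
  obtain ⟨f, h0, hl, -⟩ := h
  rw [← h0, ← hl]
  rfl

lemma edge_of_dwalk_one' {V : Type*} {E : V → V → Prop} {u v : V}
    (h : DWalk E u v 1) : E u v := by
  obtain ⟨f, h0, hl, hE⟩ := h
  have := hE 0
  simpa [h0, ← hl, Fin.last] using this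

lemma ddist_self' {V : Type*} (E : V → V → Prop) (u : V) : ddist E u u = 0 :=
  Nat.sInf_eq_zero.2 (Or.inl (dwalk_zero' E u))

lemma ddist_eq_one' {V : Type*} {E : V → V → Prop} {u v : V}
    (hne : u ≠ v) (h : E u v) : ddist E u v = 1 := by
  have h1 : ddist E u v ≤ 1 := Nat.sInf_le (dwalk_one' h)
  have h0 : ddist E u v ≠ 0 := by
    intro h0
    have hmem : ddist E u v ∈ {n | DWalk E u v n} := Nat.sInf_mem ⟨1, dwalk_one' h⟩
    rw [h0] at hmem
    exact hne (eq_of_dwalk_zero' hmem)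
  omega

lemma ddist_eq_two' {V : Type*} {E : V → V → Prop} {u v : V}
    (hne : u ≠ v) (hE : ¬ E u v) (h2 : DWalk E u v 2) : ddist E u v = 2 := by
  have hle : ddist E u v ≤ 2 := Nat.sInf_le h2
  have hmem : ddist E u v ∈ {n | DWalk E u v n} := Nat.sInf_mem ⟨2, h2⟩
  have h0 : ddist E u v ≠ 0 := fun h => hne (eq_of_dwalk_zero' (h ▸ hmem))
  have h1 : ddist E u v ≠ 1 := fun h => hE (edge_of_dwalk_one' (h ▸ hmem))
  omega

section Join
variable {V1 V2 : Type*} [Nonempty V1] [Nonempty V2]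
  {E1 : V1 → V1 → Prop} {E2 : V2 → V2 → Prop}

lemma jd_lr (a : V1) (b : V2) : ddist (joinE E1 E2) (inl a) (inr b) = 1 :=
  ddist_eq_one' (by simp) trivial

lemma jd_rl (b : V2) (a : V1) : ddist (joinE E1 E2) (inr b) (inl a) = 1 :=
  ddist_eq_one' (by simp) trivial

lemma jd_ll_le_one (a a' : V1) :
    ddist (joinE E1 E2) (inl a) (inl a') ≤ 1 ↔ a = a' ∨ E1 a a' := by
  constructor
  · intro h
    by_contra hc
    push_neg at hc
    rw [ddist_eq_two' (E := joinE E1 E2) (u := inl a) (v := inl a')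
      (by simpa using hc.1) hc.2
      (dwalk_two' (w := inr (Classical.arbitrary V2)) trivial trivial)] at h
    omega
  · rintro (rfl | h)
    · rw [ddist_self']; omega
    · exact Nat.sInf_le (dwalk_one' h)

lemma jd_rr_le_one (b b' : V2) :
    ddist (joinE E1 E2) (inr b) (inr b') ≤ 1 ↔ b = b' ∨ E2 b b' := by
  constructor
  · intro h
    by_contra hc
    push_neg at hc
    rw [ddist_eq_two' (E := joinE E1 E2) (u := inr b) (v := inr b')
      (by simpa using hc.1) hc.2
      (dwalk_two' (w := inl (Classical.arbitrary V1)) trivial trivial)] at h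
    omega
  · rintro (rfl | h)
    · rw [ddist_self']; omega
    · exact Nat.sInf_le (dwalk_one' h)

end Join

section Join2
variable {V1 V2 : Type*} [Nonempty V1] [Nonempty V2]
  {E1 : V1 → V1 → Prop} {E2 : V2 → V2 → Prop}

lemma mdt_lr (u : V1) (v : V2) :
    MDT (joinE E1 E2) (inl u) (inr v) ↔ ∀ w, w ≠ v → E2 w v := by
  constructor
  · intro h w hw
    have := h (inr w) trivial
    rw [jd_lr] at this
    rcases (jd_rr_le_one w v).1 this with h' | h'
    · exact absurd h' hw
    · exact h'
  · rintro h (u' | w) hE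
    · rw [jd_lr, jd_lr]
    · rw [jd_lr, jd_rr_le_one]
      by_cases hwv : w = v
      · exact Or.inl hwv
      · exact Or.inr (h w hwv)

lemma mdf_rl (v : V2) (u : V1) :
    MDF (joinE E1 E2) (inr v) (inl u) ↔ ∀ u', u' ≠ u → E1 u u' := by
  constructor
  · intro h u' hu'
    have := h (inl u') trivial
    rw [jd_lr] at this
    rcases (jd_ll_le_one u u').1 this with h' | h'
    · exact absurd h'.symm hu'
    · exact h'
  · rintro h (u' | w) hE
    · rw [jd_lr, jd_ll_le_one]
      by_cases huu : u' = u
      · exact Or.inl huu.symm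
      · exact Or.inr (h u' huu)
    · rw [jd_lr, jd_lr]

lemma mdt_rl (v : V2) (u : V1) :
    MDT (joinE E1 E2) (inr v) (inl u) ↔ ∀ u', u' ≠ u → E1 u' u := by
  constructor
  · intro h u' hu'
    have := h (inl u') trivial
    rw [jd_rl] at this
    rcases (jd_ll_le_one u' u).1 this with h' | h'
    · exact absurd h' hu'
    · exact h'
  · rintro h (u' | w) hE
    · rw [jd_rl, jd_ll_le_one]
      by_cases huu : u' = u
      · exact Or.inl huu
      · exact Or.inr (h u' huu)
    · rw [jd_rl, jd_rl]

lemma mdf_lr (u : V1) (v : V2) :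
    MDF (joinE E1 E2) (inl u) (inr v) ↔ ∀ w, w ≠ v → E2 v w := by
  constructor
  · intro h w hw
    have := h (inr w) trivial
    rw [jd_rl] at this
    rcases (jd_rr_le_one v w).1 this with h' | h'
    · exact absurd h'.symm hw
    · exact h'
  · rintro h (u' | w) hE
    · rw [jd_rl, jd_rl]
    · rw [jd_rl, jd_rr_le_one]
      by_cases hwv : w = v
      · exact Or.inl hwv.symm
      · exact Or.inr (h w hwv)

lemma not_fullout_iff {V : Type*} {E : V → V → Prop} (hloop : ∀ x, ¬ E x x) (u : V) :
    (¬ ∀ u', u' ≠ u → E u u') ↔ (InVertex E u ∨ SolitaryVertex E u) := by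
  push_neg
  constructor
  · rintro ⟨w, hw, hne⟩
    by_cases h : E w u
    · exact Or.inl ⟨w, h, hne⟩
    · exact Or.inr ⟨w, hw, hne, h⟩
  · rintro (⟨w, hwu, hne⟩ | ⟨w, hw, h1, h2⟩)
    · exact ⟨w, fun e => hloop u (e ▸ hwu), hne⟩
    · exact ⟨w, hw, h1⟩

lemma not_fullin_iff {V : Type*} {E : V → V → Prop} (hloop : ∀ x, ¬ E x x) (u : V) :
    (¬ ∀ u', u' ≠ u → E u' u) ↔ (OutVertex E u ∨ SolitaryVertex E u) := by
  push_neg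
  constructor
  · rintro ⟨w, hw, hne⟩
    by_cases h : E u w
    · exact Or.inl ⟨w, h, hne⟩
    · exact Or.inr ⟨w, hw, h, hne⟩
  · rintro (⟨w, hwu, hne⟩ | ⟨w, hw, h1, h2⟩)
    · exact ⟨w, fun e => hloop u (e ▸ hwu), hne⟩
    · exact ⟨w, hw, h2⟩

end Join2


set_option maxHeartbeats 800000 in
lemma logic_step {Su Sv Iu Ou Iv Ov : Prop} :
    ((Ov ∨ Sv) ∨ (Iu ∨ Su)) ∧ ((Ou ∨ Su) ∨ (Iv ∨ Sv)) ↔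
      Su ∨ Sv ∨ (Iu ∧ Ou) ∨ (Iv ∧ Ov) ∨ (Iu ∧ Iv) ∨ (Ou ∧ Ov) := by
  tauto

/-- in the join `G = G1 × G2` of two finite nonempty loopless
digraphs, for `u ∈ V(G1)` and `v ∈ V(G2)`, the pair `{u,v}` is NOT an edge
of `G_SR` iff `u` or `v` is solitary, `u` or `v` is an in-out-vertex,
both are in-vertices, or both are out-vertices (in their own graphs). -/
theorem joinE_not_adj_dsrGraph_iff {V1 V2 : Type*}
    [Fintype V1] [Fintype V2] [Nonempty V1] [Nonempty V2]
    (E1 : V1 → V1 → Prop) (E2 : V2 → V2 → Prop)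
    (hloop1 : ∀ x : V1, ¬ E1 x x) (hloop2 : ∀ x : V2, ¬ E2 x x)
    (u : V1) (v : V2) :
    ¬ (dsrGraph (joinE E1 E2)).Adj (Sum.inl u) (Sum.inr v) ↔
      SolitaryVertex E1 u ∨ SolitaryVertex E2 v ∨
      InOutVertex E1 u ∨ InOutVertex E2 v ∨
      (InVertex E1 u ∧ InVertex E2 v) ∨
      (OutVertex E1 u ∧ OutVertex E2 v) := by
  rw [show (dsrGraph (joinE E1 E2)).Adj (Sum.inl u) (Sum.inr v) ↔
      (MMDT (joinE E1 E2) (Sum.inl u) (Sum.inr v) ∨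
        MMDT (joinE E1 E2) (Sum.inr v) (Sum.inl u))
    from ⟨fun h => h.2, fun h => ⟨by simp, h⟩⟩]
  unfold MMDT
  rw [mdt_lr, mdf_rl, mdt_rl, mdf_lr]
  rw [not_or, not_and_or, not_and_or, not_fullin_iff hloop2 v,
    not_fullout_iff hloop1 u, not_fullin_iff hloop1 u, not_fullout_iff hloop2 v]
  unfold InOutVertex
  exact logic_step
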